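/- Let h(x) = (1+R)x − 1 and π(x) = x^{cμ−1}(1−x)^{c(1−μ)−1}/B(cμ, c(1−μ)). If R ≤ β/ν − 1 (equivalently 1/(1+R) ≥ ν/β), then for every x < ν/β ≤ 1/(1+R) we have π(x)·h(x) < 0; consequently for any threshold A < ν/β, the reward g(A) = ∫_A^1 π(x)h(x)dx satisfies g(A) < g(ν/β), i.e., strictly increasing the threshold up to ν/β strictly increases the one-step reward. -/

import Mathlib

open MeasureTheory Set Filter

noncomputable def betaFun (a b : ℝ) : ℝ :=
  ∫ t in (0:ℝ)..1, t ^ (a - 1) * (1 - t) ^ (b - 1)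

noncomputable def regIncBeta (x a b : ℝ) : ℝ :=
  (∫ t in (0:ℝ)..x, t ^ (a - 1) * (1 - t) ^ (b - 1)) / betaFun a b

noncomputable def betaDens (μ c x : ℝ) : ℝ :=
  x ^ (c * μ - 1) * (1 - x) ^ (c * (1 - μ) - 1) / betaFun (c * μ) (c * (1 - μ))


lemma betaKer_intIntegrable {a b : ℝ} (ha : 0 < a) (hb : 0 < b) :
    IntervalIntegrable (fun t : ℝ => t ^ (a - 1) * (1 - t) ^ (b - 1)) volume 0 1 := by
  have h := Complex.betaIntegral_convergent (u := (a : ℂ)) (v := (b : ℂ))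
    (by simpa using ha) (by simpa using hb)
  rw [intervalIntegrable_iff_integrableOn_Ioc_of_le (by norm_num)] at h ⊢
  have hre : IntegrableOn (fun x : ℝ => ((x:ℂ) ^ ((a:ℂ) - 1) * (1 - (x:ℂ)) ^ ((b:ℂ) - 1)).re) (Ioc 0 1) volume := h.re
  refine hre.congr_fun ?_ measurableSet_Ioc
  intro x hx
  have hx0 : (0:ℝ) ≤ x := le_of_lt hx.1
  have hx1 : (0:ℝ) ≤ 1 - x := by linarith [hx.2]
  have e1 : ((x : ℂ)) ^ ((a : ℂ) - 1) = ((x ^ (a - 1) : ℝ) : ℂ) := by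
    rw [Complex.ofReal_cpow hx0]; push_cast; ring_nf
  have e2 : ((1 : ℂ) - (x : ℂ)) ^ ((b : ℂ) - 1) = (((1 - x) ^ (b - 1) : ℝ) : ℂ) := by
    rw [show ((1:ℂ) - (x:ℂ)) = (((1 - x : ℝ)) : ℂ) by push_cast; ring,
      Complex.ofReal_cpow hx1]; push_cast; ring_nf
  simp [Function.comp, e1, e2, ← Complex.ofReal_mul]

theorem stmt6 (μ c β ν R : ℝ) (hμ : μ ∈ Set.Ioo (0:ℝ) 1) (hc : 0 < c)
    (hβ : β ∈ Set.Ioc (0:ℝ) 1) (hν : ν ∈ Set.Ioo (0:ℝ) 1) (hνβ : ν < β)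
    (hR : 0 < R) (hRb : R ≤ β / ν - 1)
    (g : ℝ → ℝ)
    (hg : ∀ A, g A = ∫ x in A..1, betaDens μ c x * ((1 + R) * x - 1)) :
    (∀ x ∈ Set.Ioo 0 (ν / β), betaDens μ c x * ((1 + R) * x - 1) < 0)
    ∧ (∀ A ∈ Set.Ico (0:ℝ) (ν / β), g A < g (ν / β)) := by
  obtain ⟨hμ0, hμ1⟩ := hμ
  obtain ⟨hβ0, hβ1⟩ := hβ
  obtain ⟨hν0, hν1⟩ := hν
  set a : ℝ := c * μ with ha_def
  set b : ℝ := c * (1 - μ) with hb_def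
  have ha : 0 < a := by positivity
  have hb : 0 < b := mul_pos hc (by linarith)
  have hker := betaKer_intIntegrable ha hb
  have hBpos : 0 < betaFun a b := by
    refine intervalIntegral.intervalIntegral_pos_of_pos_on hker (fun x hx => ?_) (by norm_num)
    have h1 : 0 < x := hx.1
    have h2 : 0 < 1 - x := by linarith [hx.2]
    positivity
  have hνβ0 : 0 < ν / β := div_pos hν0 hβ0
  have hνβ1 : ν / β < 1 := (div_lt_one hβ0).2 hνβ
  -- key bound : (1+R) * (ν/β) ≤ 1
  have hkey : (1 + R) * (ν / β) ≤ 1 := by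
    have h1 : 1 + R ≤ β / ν := by linarith
    calc (1 + R) * (ν / β) ≤ (β / ν) * (ν / β) :=
          mul_le_mul_of_nonneg_right h1 (le_of_lt hνβ0)
      _ = 1 := by field_simp
  have hpart1 : ∀ x ∈ Set.Ioo 0 (ν / β), betaDens μ c x * ((1 + R) * x - 1) < 0 := by
    intro x hx
    have hx0 : 0 < x := hx.1
    have hx1 : 0 < 1 - x := by linarith [hx.2, hνβ1]
    have hdens : 0 < betaDens μ c x := by
      rw [betaDens]; positivity
    have hneg : (1 + R) * x - 1 < 0 := by
      have : (1 + R) * x < (1 + R) * (ν / β) :=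
        mul_lt_mul_of_pos_left hx.2 (by linarith)
      linarith
    exact mul_neg_of_pos_of_neg hdens hneg
  refine ⟨hpart1, ?_⟩
  intro A hA
  obtain ⟨hA0, hA1⟩ := hA
  set f : ℝ → ℝ := fun x => betaDens μ c x * ((1 + R) * x - 1) with hf_def
  have hf01 : IntervalIntegrable f volume 0 1 := by
    have h1 := hker.mul_continuousOn
      (Continuous.continuousOn (by continuity : Continuous fun x : ℝ => (1 + R) * x - 1))
    have h2 := h1.div_const (betaFun a b)
    refine h2.congr ?_
    intro x _
    simp only [hf_def, betaDens, ha_def, hb_def]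
    ring
  have hsub : ∀ p q : ℝ, 0 ≤ p → q ≤ 1 → p ≤ q → IntervalIntegrable f volume p q := by
    intro p q hp hq hpq
    refine hf01.mono_set ?_
    rw [Set.uIcc_of_le hpq, Set.uIcc_of_le (by norm_num)]
    exact Set.Icc_subset_Icc hp hq
  have hfA : IntervalIntegrable f volume A (ν / β) :=
    hsub A (ν / β) hA0 hνβ1.le (le_of_lt hA1)
  have hfB : IntervalIntegrable f volume (ν / β) 1 :=
    hsub (ν / β) 1 hνβ0.le le_rfl hνβ1.le
  have hadd : (∫ x in A..(ν / β), f x) + (∫ x in (ν / β)..1, f x) = ∫ x in A..1, f x :=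
    intervalIntegral.integral_add_adjacent_intervals hfA hfB
  have hneg : (∫ x in A..(ν / β), f x) < 0 := by
    have hpos : 0 < ∫ x in A..(ν / β), (fun x => -f x) x := by
      refine intervalIntegral.intervalIntegral_pos_of_pos_on hfA.neg (fun x hx => ?_) hA1
      have : x ∈ Set.Ioo 0 (ν / β) := ⟨lt_of_le_of_lt hA0 hx.1, hx.2⟩
      simpa using hpart1 x this
    rw [intervalIntegral.integral_neg] at hpos
    linarith
  rw [hg A, hg (ν / β)]
  rw [← hadd]
  linarith
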